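/- For j = 1, …, p, let V_j be a finite-dimensional complex normed vector space of complex dimension n_j, with Borel σ-algebra and additive Haar measure μ_j, and let Ω_j ⊆ V_j be a nonempty bounded open set which is symmetric (v ∈ Ω_j iff -v ∈ Ω_j). Let V = V₁ × ⋯ × V_p with product measure μ = μ₁ ⊗ ⋯ ⊗ μ_p, let Ω = Ω₁ × ⋯ × Ω_p, and let n = n₁ + ⋯ + n_p. For a complex-linear functional θ on V and each j, let θ_j denote the complex-linear functional on V_j given by θ_j(x) = θ(0, …, 0, x, 0, …, 0) (x placed in the j-th slot). Then for all complex-linear functionals θ, φ on V, the dual Binet–Legendre forms satisfy g*_Ω(θ, φ) = Σ_{j=1}^{p} ((n+1)/(n_j+1)) · g*_{Ω_j}(θ_j, φ_j). -/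

import Mathlib

open MeasureTheory

section Aux
variable {W : Type*} [NormedAddCommGroup W] [NormedSpace ℂ W] [FiniteDimensional ℂ W]
  [MeasurableSpace W] [BorelSpace W]

lemma myIntegrableOn (μ : Measure W) [μ.IsAddHaarMeasure]
    {Ω : Set W} (hbdd : Bornology.IsBounded Ω) {f : W → ℂ} (hf : Continuous f) :
    IntegrableOn f Ω μ := by
  have : ProperSpace W := FiniteDimensional.proper ℂ W
  exact (hf.continuousOn.integrableOn_compact hbdd.isCompact_closure).mono_set subset_closure

lemma myOddZero (μ : Measure W) [μ.IsAddHaarMeasure]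
    {Ω : Set W} (hΩ : MeasurableSet Ω) (hsym : ∀ v, v ∈ Ω ↔ -v ∈ Ω)
    (θ : W →ₗ[ℂ] ℂ) : ∫ η in Ω, θ η ∂μ = 0 := by
  have h1 : ∫ η in Ω, θ η ∂μ = ∫ η, Ω.indicator (fun x => θ x) η ∂μ :=
    (integral_indicator hΩ).symm
  have h2 : ∀ x, Ω.indicator (fun x => θ x) (-x) = - Ω.indicator (fun x => θ x) x := by
    intro x
    by_cases hx : x ∈ Ω
    · rw [Set.indicator_of_mem ((hsym x).mp hx), Set.indicator_of_mem hx, map_neg]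
    · rw [Set.indicator_of_notMem (fun h => hx (by simpa using (hsym (-x)).mp h)),
        Set.indicator_of_notMem hx, neg_zero]
  have h3 := integral_neg_eq_self (Ω.indicator fun x => θ x) μ
  simp_rw [h2, integral_neg] at h3
  rw [h1]; linear_combination (-1/2 : ℂ) * h3
end Aux

lemma myPiRestrict {p : ℕ} {V : Fin p → Type*} [∀ j, MeasurableSpace (V j)]
    (μ : ∀ j, Measure (V j)) [∀ j, SigmaFinite (μ j)]
    (Ω : ∀ j, Set (V j)) (hΩ : ∀ j, MeasurableSet (Ω j)) :
    (Measure.pi μ).restrict (Set.univ.pi Ω) = Measure.pi (fun j => (μ j).restrict (Ω j)) := by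
  refine (Measure.pi_eq fun s hs => ?_).symm
  rw [Measure.restrict_apply (MeasurableSet.univ_pi hs), ← Set.pi_inter_distrib,
    Measure.pi_pi]
  exact Finset.prod_congr rfl fun j _ => (Measure.restrict_apply (hs j)).symm

theorem dualBL_pi'
    {p : ℕ} (V : Fin p → Type*) [∀ j, NormedAddCommGroup (V j)]
    [∀ j, NormedSpace ℂ (V j)] [∀ j, FiniteDimensional ℂ (V j)]
    [∀ j, MeasurableSpace (V j)] [∀ j, BorelSpace (V j)]
    (μ : ∀ j, Measure (V j)) [∀ j, (μ j).IsAddHaarMeasure]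
    (nj : Fin p → ℕ) (hnj : ∀ j, Module.finrank ℂ (V j) = nj j)
    (Ω : ∀ j, Set (V j))
    (hopen : ∀ j, IsOpen (Ω j)) (hne : ∀ j, (Ω j).Nonempty)
    (hbdd : ∀ j, Bornology.IsBounded (Ω j))
    (hsym : ∀ j, ∀ v : V j, v ∈ Ω j ↔ -v ∈ Ω j)
    (n : ℕ) (hn : n = ∑ j, nj j)
    (θ φ : (∀ j, V j) →ₗ[ℂ] ℂ) :
    (((n : ℂ) + 1) / (((Measure.pi μ) (Set.univ.pi Ω)).toReal : ℂ)) *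
        ∫ η in Set.univ.pi Ω, θ η * (starRingEnd ℂ) (φ η) ∂(Measure.pi μ) =
      ∑ j, (((n : ℂ) + 1) / ((nj j : ℂ) + 1)) *
        ((((nj j : ℂ) + 1) / (((μ j) (Ω j)).toReal : ℂ)) *
          ∫ η in Ω j, θ (Pi.single j η) * (starRingEnd ℂ) (φ (Pi.single j η)) ∂(μ j)) := by
  classical
  haveI : ∀ j, ProperSpace (V j) := fun j => FiniteDimensional.proper ℂ (V j)
  have hmeas : ∀ j, MeasurableSet (Ω j) := fun j => (hopen j).measurableSet
  have hfin : ∀ j, μ j (Ω j) ≠ ⊤ := fun j => (hbdd j).measure_lt_top.ne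
  have hpos : ∀ j, μ j (Ω j) ≠ 0 := fun j => (hopen j).measure_ne_zero _ (hne j)
  set C : Fin p → ℂ := fun j => (((μ j) (Ω j)).toReal : ℂ) with hC
  have hCne : ∀ j, C j ≠ 0 := by
    intro j
    simp only [hC, ne_eq, Complex.ofReal_eq_zero]
    exact ENNReal.toReal_ne_zero.mpr ⟨hpos j, hfin j⟩
  -- the restricted measures, as a MeasureSpace instance
  letI MS : ∀ j, MeasureSpace (V j) :=
    fun j => { toMeasurableSpace := inferInstance, volume := (μ j).restrict (Ω j) }
  haveI : ∀ j, IsFiniteMeasure (volume : Measure (V j)) := fun j =>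
    ⟨by rw [show (volume : Measure (V j)) = (μ j).restrict (Ω j) from rfl,
        Measure.restrict_apply_univ]; exact (hfin j).lt_top⟩
  haveI : ∀ j, SigmaFinite (volume : Measure (V j)) := fun j => inferInstance
  -- continuity facts
  have hcontθ : ∀ i, Continuous fun x : V i => θ (Pi.single i x) :=
    fun i => (θ.comp (LinearMap.single ℂ V i)).continuous_of_finiteDimensional
  have hcontφ : ∀ i, Continuous fun x : V i => (starRingEnd ℂ) (φ (Pi.single i x)) :=
    fun i => Complex.continuous_conj.comp
      (φ.comp (LinearMap.single ℂ V i)).continuous_of_finiteDimensional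
  -- the factor functions
  set F : Fin p → Fin p → (i : Fin p) → V i → ℂ := fun j k i x =>
    (if i = j then θ (Pi.single i x) else 1) *
      (if i = k then (starRingEnd ℂ) (φ (Pi.single i x)) else 1) with hFdef
  have hFcont : ∀ j k i, Continuous (F j k i) := by
    intro j k i
    apply Continuous.mul
    · by_cases h : i = j <;> simp [h, hcontθ i, continuous_const]
    · by_cases h : i = k <;> simp [h, hcontφ i, continuous_const]
  have hFint : ∀ j k i, Integrable (F j k i) (volume : Measure (V i)) :=
    fun j k i => myIntegrableOn (μ i) (hbdd i) (hFcont j k i)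
  -- expansion of the integrand
  have hexp : ∀ η : ∀ j, V j, θ η * (starRingEnd ℂ) (φ η)
      = ∑ j, ∑ k, ∏ i, F j k i (η i) := by
    intro η
    have h1 : θ η = ∑ j, θ (Pi.single j (η j)) := by
      conv_lhs => rw [← Finset.univ_sum_single η]
      rw [map_sum]
    have h2 : (starRingEnd ℂ) (φ η) = ∑ k, (starRingEnd ℂ) (φ (Pi.single k (η k))) := by
      conv_lhs => rw [← Finset.univ_sum_single η]
      rw [map_sum, map_sum]
    rw [h1, h2, Finset.sum_mul_sum]
    refine Finset.sum_congr rfl fun j _ => Finset.sum_congr rfl fun k _ => ?_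
    rw [hFdef]
    rw [Finset.prod_mul_distrib, Finset.prod_ite_eq' Finset.univ j
      (fun i => θ (Pi.single i (η i))), Finset.prod_ite_eq' Finset.univ k
      (fun i => (starRingEnd ℂ) (φ (Pi.single i (η i))))]
    simp
  -- the main integral computation
  have hres : (Measure.pi μ).restrict (Set.univ.pi Ω)
      = Measure.pi (fun j => (μ j).restrict (Ω j)) := myPiRestrict μ Ω hmeas
  have hvol : Measure.pi (fun j => (μ j).restrict (Ω j))
      = (volume : Measure (∀ j, V j)) := volume_pi.symm
  have key : ∫ η in Set.univ.pi Ω, θ η * (starRingEnd ℂ) (φ η) ∂(Measure.pi μ)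
      = ∑ j, ∑ k, ∏ i, ∫ x, F j k i x ∂(volume : Measure (V i)) := by
    rw [hres, hvol]
    calc ∫ η, θ η * (starRingEnd ℂ) (φ η)
        = ∫ η : ∀ j, V j, ∑ j, ∑ k, ∏ i, F j k i (η i) := by simp_rw [hexp]
      _ = ∑ j, ∫ η : ∀ j, V j, ∑ k, ∏ i, F j k i (η i) := by
          refine integral_finset_sum _ fun j _ => integrable_finset_sum _ fun k _ => ?_
          exact Integrable.fintype_prod_dep (fun i => hFint j k i)
      _ = ∑ j, ∑ k, ∫ η : ∀ j, V j, ∏ i, F j k i (η i) := by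
          refine Finset.sum_congr rfl fun j _ => integral_finset_sum _ fun k _ => ?_
          exact Integrable.fintype_prod_dep (fun i => hFint j k i)
      _ = ∑ j, ∑ k, ∏ i, ∫ x, F j k i x ∂(volume : Measure (V i)) := by
          refine Finset.sum_congr rfl fun j _ => Finset.sum_congr rfl fun k _ => ?_
          exact integral_fintype_prod_eq_prod (μ := fun i => (volume : Measure (V i))) (F j k)
  -- evaluation of the single-factor integrals
  have hone : ∀ i, ∫ x, (1 : ℂ) ∂(volume : Measure (V i)) = C i := by
    intro i
    rw [integral_const,
      show (volume : Measure (V i)).real Set.univ = ((μ i) (Ω i)).toReal from by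
        rw [Measure.real, show (volume : Measure (V i)) = (μ i).restrict (Ω i) from rfl,
          Measure.restrict_apply_univ]]
    simp [hC, Complex.real_smul]
  have hzero : ∀ j k, j ≠ k → ∫ x, F j k j x ∂(volume : Measure (V j)) = 0 := by
    intro j k hjk
    have : F j k j = fun x => θ (Pi.single j x) := by
      funext x; simp [hFdef, if_neg hjk]
    rw [this]
    exact myOddZero (μ j) (hmeas j) (hsym j) (θ.comp (LinearMap.single ℂ V j))
  have hcross : ∀ j k, j ≠ k →
      (∏ i, ∫ x, F j k i x ∂(volume : Measure (V i))) = 0 :=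
    fun j k hjk => Finset.prod_eq_zero (Finset.mem_univ j) (hzero j k hjk)
  have hdiagF : ∀ j i, i ≠ j → ∫ x, F j j i x ∂(volume : Measure (V i)) = C i := by
    intro j i hij
    have : F j j i = fun _ => (1 : ℂ) := by funext x; simp [hFdef, hij]
    rw [this, hone i]
  have hdiagj : ∀ j, ∫ x, F j j j x ∂(volume : Measure (V j))
      = ∫ η in Ω j, θ (Pi.single j η) * (starRingEnd ℂ) (φ (Pi.single j η)) ∂(μ j) := by
    intro j
    congr 1
    funext x; simp [hFdef]
  -- combine
  set I : Fin p → ℂ := fun j =>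
    ∫ η in Ω j, θ (Pi.single j η) * (starRingEnd ℂ) (φ (Pi.single j η)) ∂(μ j) with hI
  have hdiag : ∀ j, (∏ i, ∫ x, F j j i x ∂(volume : Measure (V i)))
      = I j * ∏ i ∈ Finset.univ.erase j, C i := by
    intro j
    rw [← Finset.mul_prod_erase Finset.univ _ (Finset.mem_univ j), hdiagj j]
    congr 1
    exact Finset.prod_congr rfl fun i hi => hdiagF j i (Finset.ne_of_mem_erase hi)
  have key2 : ∫ η in Set.univ.pi Ω, θ η * (starRingEnd ℂ) (φ η) ∂(Measure.pi μ)
      = ∑ j, I j * ∏ i ∈ Finset.univ.erase j, C i := by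
    rw [key]
    refine Finset.sum_congr rfl fun j _ => ?_
    rw [Finset.sum_eq_single j (fun k _ hkj => hcross j k (Ne.symm hkj)) (by simp), hdiag j]
  -- total measure
  have htot : (((Measure.pi μ) (Set.univ.pi Ω)).toReal : ℂ) = ∏ i, C i := by
    rw [Measure.pi_pi, ENNReal.toReal_prod]
    push_cast
    rfl
  rw [key2, htot, Finset.mul_sum]
  refine Finset.sum_congr rfl fun j _ => ?_
  rw [← Finset.mul_prod_erase Finset.univ C (Finset.mem_univ j)]
  have hPne : (∏ i ∈ Finset.univ.erase j, C i) ≠ 0 :=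
    Finset.prod_ne_zero_iff.mpr fun i _ => hCne i
  have hnj1 : ((nj j : ℂ) + 1) ≠ 0 := Nat.cast_add_one_ne_zero (nj j)
  field_simp [hPne, hCne j, hnj1]
  ring_nf
  show I j = (C j * I j) * (C j)⁻¹
  rw [mul_comm, ← mul_assoc, inv_mul_cancel₀ (hCne j), one_mul]

/-- The dual complex Binet–Legendre form of a set `Ω`:
`g*_Ω(θ, φ) = ((n+1)/μ(Ω)) ∫_Ω θ(η) conj(φ(η)) dμ(η)`. -/
noncomputable def dualBL {V : Type*} [NormedAddCommGroup V] [NormedSpace ℂ V]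
    [MeasurableSpace V] (μ : Measure V) (n : ℕ) (Ω : Set V)
    (θ φ : V →ₗ[ℂ] ℂ) : ℂ :=
  (((n : ℂ) + 1) / ((μ Ω).toReal : ℂ)) * ∫ η in Ω, θ η * (starRingEnd ℂ) (φ η) ∂μ

/-- Product formula for the dual Binet–Legendre form: for symmetric
nonempty bounded open sets `Ω j ⊆ V j` and `Ω = Ω₁ × ⋯ × Ω_p`,
`g*_Ω(θ, φ) = Σ_j ((n+1)/(n_j+1)) g*_{Ω_j}(θ_j, φ_j)`, where `θ_j` is the restriction
of `θ` to the `j`-th factor. -/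
theorem dualBL_pi
    {p : ℕ} (V : Fin p → Type*) [∀ j, NormedAddCommGroup (V j)]
    [∀ j, NormedSpace ℂ (V j)] [∀ j, FiniteDimensional ℂ (V j)]
    [∀ j, MeasurableSpace (V j)] [∀ j, BorelSpace (V j)]
    (μ : ∀ j, Measure (V j)) [∀ j, (μ j).IsAddHaarMeasure]
    (nj : Fin p → ℕ) (hnj : ∀ j, Module.finrank ℂ (V j) = nj j)
    (Ω : ∀ j, Set (V j))
    (hopen : ∀ j, IsOpen (Ω j)) (hne : ∀ j, (Ω j).Nonempty)
    (hbdd : ∀ j, Bornology.IsBounded (Ω j))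
    (hsym : ∀ j, ∀ v : V j, v ∈ Ω j ↔ -v ∈ Ω j)
    (n : ℕ) (hn : n = ∑ j, nj j)
    (θ φ : (∀ j, V j) →ₗ[ℂ] ℂ) :
    dualBL (Measure.pi μ) n (Set.univ.pi Ω) θ φ =
      ∑ j, (((n : ℂ) + 1) / ((nj j : ℂ) + 1)) *
        dualBL (μ j) (nj j) (Ω j)
          (θ.comp (LinearMap.single ℂ V j)) (φ.comp (LinearMap.single ℂ V j)) := by
  unfold dualBL
  exact dualBL_pi' V μ nj hnj Ω hopen hne hbdd hsym n hn θ φ
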